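/- arXiv:2208.06574 — 6 statements merged into one kernel-verified Lean document; each statement's English description precedes it below -/
import Mathlib

section
/- If T = αI - K₁ + K₂ on a complex Hilbert space H, where α ≥ 0, K₁ and K₂ are positive compact operators with K₁K₂ = 0 and K₁ ≤ αI, then the null space of T is contained in the null space of K₂. -/
open ContinuousLinearMap

/-- If `T = αI - K₁ + K₂` with `α ≥ 0`, `K₁, K₂` positive compact operators,
`K₁K₂ = 0` and `K₁ ≤ αI`, then `N(T) ⊆ N(K₂)`. -/
theorem stmt_0 {H : Type*} [NormedAddCommGroup H] [InnerProductSpace ℂ H]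
    [CompleteSpace H] (α : ℝ) (hα : 0 ≤ α) (K₁ K₂ T : H →L[ℂ] H)
    (hK₁pos : K₁.IsPositive) (hK₂pos : K₂.IsPositive)
    (hK₁cpt : IsCompactOperator ⇑K₁) (hK₂cpt : IsCompactOperator ⇑K₂)
    (hK₁K₂ : K₁ ∘L K₂ = 0)
    (hK₁le : ((α : ℂ) • (1 : H →L[ℂ] H) - K₁).IsPositive)
    (hT : T = (α : ℂ) • (1 : H →L[ℂ] H) - K₁ + K₂) :
    LinearMap.ker (T : H →ₗ[ℂ] H) ≤ LinearMap.ker (K₂ : H →ₗ[ℂ] H) := by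
  have hK₂K₁ : K₂ ∘L K₁ = 0 := by
    have := congrArg ContinuousLinearMap.adjoint hK₁K₂
    rwa [adjoint_comp, hK₁pos.isSelfAdjoint.adjoint_eq, hK₂pos.isSelfAdjoint.adjoint_eq,
      map_zero] at this
  intro x hx
  have hx' : T x = 0 := hx
  rw [hT] at hx'
  -- apply K₂
  have h2 : (α : ℂ) • K₂ x + K₂ (K₂ x) = 0 := by
    have := congrArg K₂ hx'
    simp only [add_apply, sub_apply, smul_apply, one_apply, map_add, map_sub, map_smul,
      map_zero] at this
    have hz : K₂ (K₁ x) = 0 := by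
      have : (K₂ ∘L K₁) x = (0 : H →L[ℂ] H) x := by rw [hK₂K₁]
      simpa using this
    rw [hz] at this
    simpa using this
  have hinner : (0 : ℝ) = α * RCLike.re (inner ℂ x (K₂ x) : ℂ) + ‖K₂ x‖ ^ 2 := by
    have := congrArg (fun y => RCLike.re (inner ℂ x y : ℂ)) h2
    simp only [inner_add_right, inner_smul_right, inner_zero_right, map_add] at this
    rw [show (inner ℂ x (K₂ (K₂ x)) : ℂ) = (inner ℂ (K₂ x) (K₂ x) : ℂ) by
      exact (hK₂pos.isSelfAdjoint.isSymmetric x (K₂ x)).symm] at this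
    rw [inner_self_eq_norm_sq (𝕜 := ℂ)] at this
    simpa using this.symm
  have h1 : 0 ≤ α * RCLike.re (inner ℂ x (K₂ x) : ℂ) :=
    mul_nonneg hα (RCLike.nonneg_iff.mp (hK₂pos.inner_nonneg_right x)).1
  have hnorm : ‖K₂ x‖ ^ 2 ≤ 0 := by linarith
  have : ‖K₂ x‖ = 0 := by nlinarith [norm_nonneg (K₂ x), sq_nonneg ‖K₂ x‖]
  simpa [LinearMap.mem_ker] using norm_eq_zero.mp this
end

section
/- If T = αI - K₁ + K₂ with α > 0, K₁, K₂ positive compact operators, K₁K₂ = 0 and K₁ ≤ αI, then every x in the null space of T satisfies K₁x = αx; consequently N(T) ⊆ R(K₁) and, if N(T) ≠ {0}, then ‖K₁‖ = α. -/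
set_option synthInstance.maxHeartbeats 800000
set_option maxHeartbeats 1600000

open ContinuousLinearMap

private lemma aux_pos_inner_zero {H : Type*} [NormedAddCommGroup H] [InnerProductSpace ℂ H]
    [CompleteSpace H] (A : H →L[ℂ] H) (hA : A.IsPositive) (x : H)
    (h : RCLike.re (inner ℂ (A x) x : ℂ) = 0) : A x = 0 := by
  have hA' : 0 ≤ A := (nonneg_iff_isPositive A).mpr hA
  set S := CFC.sqrt A with hS
  have hSnn : 0 ≤ S := CFC.sqrt_nonneg (a := A)
  have hSS : S * S = A := CFC.sqrt_mul_sqrt_self A hA'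
  have hSsa : IsSelfAdjoint S := IsSelfAdjoint.of_nonneg hSnn
  have hinner : (inner ℂ (A x) x : ℂ) = inner ℂ (S x) (S x) := by
    rw [← hSS]
    have : (S * S) x = S (S x) := rfl
    rw [this]
    calc (inner ℂ (S (S x)) x : ℂ) = inner ℂ ((ContinuousLinearMap.adjoint S) (S x)) x := by
          rw [hSsa.adjoint_eq]
      _ = inner ℂ (S x) (S x) := ContinuousLinearMap.adjoint_inner_left S x (S x)
  have : ‖S x‖ ^ 2 = 0 := by
    have := h
    rw [hinner] at this
    simpa [inner_self_eq_norm_sq, ← Complex.ofReal_pow] using this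
  have hSx : S x = 0 := by
    have := pow_eq_zero_iff (n := 2) (two_ne_zero) |>.mp this
    simpa using this
  calc A x = (S * S) x := by rw [hSS]
    _ = S (S x) := rfl
    _ = 0 := by rw [hSx, map_zero]

/-- If `T = αI - K₁ + K₂` with `α > 0`, `K₁, K₂` positive compact, `K₁K₂ = 0`,
`K₁ ≤ αI`, then every `x ∈ N(T)` satisfies `K₁x = αx`; hence `N(T) ⊆ R(K₁)`
and if `N(T) ≠ {0}` then `‖K₁‖ = α`. -/
theorem stmt_1 {H : Type*} [NormedAddCommGroup H] [InnerProductSpace ℂ H]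
    [CompleteSpace H] (α : ℝ) (hα : 0 < α) (K₁ K₂ T : H →L[ℂ] H)
    (hK₁pos : K₁.IsPositive) (hK₂pos : K₂.IsPositive)
    (hK₁cpt : IsCompactOperator ⇑K₁) (hK₂cpt : IsCompactOperator ⇑K₂)
    (hK₁K₂ : K₁ ∘L K₂ = 0)
    (hK₁le : ((α : ℂ) • (1 : H →L[ℂ] H) - K₁).IsPositive)
    (hT : T = (α : ℂ) • (1 : H →L[ℂ] H) - K₁ + K₂) :
    (∀ x ∈ LinearMap.ker (T : H →ₗ[ℂ] H), K₁ x = (α : ℂ) • x) ∧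
      LinearMap.ker (T : H →ₗ[ℂ] H) ≤ LinearMap.range (K₁ : H →ₗ[ℂ] H) ∧
      (LinearMap.ker (T : H →ₗ[ℂ] H) ≠ ⊥ → ‖K₁‖ = α) := by
  set A : H →L[ℂ] H := (α : ℂ) • (1 : H →L[ℂ] H) - K₁ with hA
  have key : ∀ x ∈ LinearMap.ker (T : H →ₗ[ℂ] H), K₁ x = (α : ℂ) • x := by
    intro x hx
    have hx0 : T x = 0 := hx
    have hsum : A x + K₂ x = 0 := by
      rw [hT] at hx0
      simpa using hx0
    have hre : RCLike.re (inner ℂ (A x) x : ℂ) + RCLike.re (inner ℂ (K₂ x) x : ℂ) = 0 := by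
      have : (inner ℂ (A x + K₂ x) x : ℂ) = 0 := by rw [hsum, inner_zero_left]
      rw [inner_add_left] at this
      have := congrArg RCLike.re this
      simpa using this
    have h1 : 0 ≤ RCLike.re (inner ℂ (A x) x : ℂ) := hK₁le.re_inner_nonneg_left x
    have h2 : 0 ≤ RCLike.re (inner ℂ (K₂ x) x : ℂ) := hK₂pos.re_inner_nonneg_left x
    have hAx : A x = 0 := aux_pos_inner_zero A hK₁le x (by linarith)
    have : (α : ℂ) • x - K₁ x = 0 := by simpa [hA] using hAx
    linear_combination (norm := module) -this
  refine ⟨key, ?_, ?_⟩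
  · intro x hx
    refine ⟨(α : ℂ)⁻¹ • x, ?_⟩
    have hα' : (α : ℂ) ≠ 0 := by exact_mod_cast hα.ne'
    simp only [map_smul, ContinuousLinearMap.coe_coe, key x hx, smul_smul, inv_mul_cancel₀ hα', one_smul]
  · intro hker
    obtain ⟨x, hxmem, hxne⟩ := Submodule.exists_mem_ne_zero_of_ne_bot hker
    have : Nontrivial H := nontrivial_of_ne x 0 hxne
    -- lower bound
    have hKx : K₁ x = (α : ℂ) • x := key x hxmem
    have hlow : α ≤ ‖K₁‖ := by
      have h1 := K₁.le_opNorm x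
      rw [hKx, norm_smul] at h1
      have hxpos : 0 < ‖x‖ := norm_pos_iff.mpr hxne
      have : ‖(α : ℂ)‖ = α := by
        rw [Complex.norm_real, Real.norm_of_nonneg hα.le]
      rw [this] at h1
      exact le_of_mul_le_mul_right h1 hxpos
    -- upper bound
    have h0 : 0 ≤ K₁ := (nonneg_iff_isPositive K₁).mpr hK₁pos
    have hle : K₁ ≤ (α : ℂ) • (1 : H →L[ℂ] H) := (le_def _ _).mpr hK₁le
    have hup : ‖K₁‖ ≤ ‖(α : ℂ) • (1 : H →L[ℂ] H)‖ :=
      CStarAlgebra.norm_le_norm_of_nonneg_of_le h0 hle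
    have : ‖(α : ℂ) • (1 : H →L[ℂ] H)‖ = α := by
      rw [norm_smul, norm_one, Complex.norm_real, Real.norm_of_nonneg hα.le, mul_one]
    rw [this] at hup
    linarith
end

section
/- Let T = αI - K₁ + K₂ with α > 0, K₁, K₂ positive compact operators, K₁K₂ = 0 and K₁ ≤ αI. Then T fails to be injective if and only if ‖K₁‖ = α. -/
open ContinuousLinearMap
set_option synthInstance.maxHeartbeats 1000000
set_option maxHeartbeats 1000000

section aux
variable {H : Type*} [NormedAddCommGroup H] [InnerProductSpace ℂ H] [CompleteSpace H]

lemma aux_smul_sub_sq (α : ℝ) (K : H →L[ℂ] H) (hK : K.IsPositive)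
    (hle : ((α : ℂ) • (1 : H →L[ℂ] H) - K).IsPositive) :
    ((α : ℂ) • K - K * K).IsPositive := by
  rw [← nonneg_iff_isPositive] at hK hle ⊢
  set s := CFC.sqrt K with hs
  have hs0 : (0 : H →L[ℂ] H) ≤ s := CFC.sqrt_nonneg K
  have hss : s * s = K := CFC.sqrt_mul_sqrt_self K hK
  have h := star_left_conjugate_nonneg hle s
  have hsK : s * K * s = K * K := by rw [← hss]; noncomm_ring
  rwa [(IsSelfAdjoint.of_nonneg hs0).star_eq, mul_sub, sub_mul, mul_smul_comm, mul_one,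
    smul_mul_assoc, hss, hsK] at h

end aux

/-- `T = αI - K₁ + K₂` (α > 0, K₁,K₂ positive compact, K₁K₂ = 0, K₁ ≤ αI)
fails to be injective iff `‖K₁‖ = α`. -/
theorem stmt_2 {H : Type*} [NormedAddCommGroup H] [InnerProductSpace ℂ H]
    [CompleteSpace H] (α : ℝ) (hα : 0 < α) (K₁ K₂ T : H →L[ℂ] H)
    (hK₁pos : K₁.IsPositive) (hK₂pos : K₂.IsPositive)
    (hK₁cpt : IsCompactOperator ⇑K₁) (hK₂cpt : IsCompactOperator ⇑K₂)
    (hK₁K₂ : K₁ ∘L K₂ = 0)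
    (hK₁le : ((α : ℂ) • (1 : H →L[ℂ] H) - K₁).IsPositive)
    (hT : T = (α : ℂ) • (1 : H →L[ℂ] H) - K₁ + K₂) :
    ¬ Function.Injective T ↔ ‖K₁‖ = α := by
  have hαC : (α : ℂ) ≠ 0 := by exact_mod_cast hα.ne'
  have hK₂K₁ : K₂ ∘L K₁ = 0 := by
    have h := congrArg star hK₁K₂
    rwa [star_zero, ← ContinuousLinearMap.mul_def, star_mul, hK₁pos.isSelfAdjoint.star_eq,
      hK₂pos.isSelfAdjoint.star_eq, ContinuousLinearMap.mul_def] at h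
  rcases subsingleton_or_nontrivial H with hsub | hnt
  · constructor
    · intro h; exact absurd (fun a b _ => Subsingleton.elim a b) h
    · intro h
      have hK : K₁ = 0 := Subsingleton.elim _ _
      rw [hK, norm_zero] at h
      exact absurd h hα.ne
  have hnormle : ‖K₁‖ ≤ α := by
    have h0K : (0 : H →L[ℂ] H) ≤ K₁ := (nonneg_iff_isPositive K₁).2 hK₁pos
    have hle1 : K₁ ≤ (α : ℂ) • 1 := (le_def _ _).2 (by simpa using hK₁le)
    have h := CStarAlgebra.norm_le_norm_of_nonneg_of_le h0K hle1
    rw [norm_smul, norm_one, mul_one, Complex.norm_real] at h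
    rwa [Real.norm_of_nonneg hα.le] at h
  constructor
  · intro hinj
    rw [Function.not_injective_iff] at hinj
    obtain ⟨a, b, hab, hne⟩ := hinj
    set z := a - b with hz
    have hz0 : z ≠ 0 := sub_ne_zero.2 hne
    have hTz : T z = 0 := by rw [map_sub, hab, sub_self]
    rw [hT] at hTz
    have hTz' : (α : ℂ) • z - K₁ z + K₂ z = 0 := by simpa using hTz
    have hK₂K₁z : K₂ (K₁ z) = 0 := by
      have h := ContinuousLinearMap.ext_iff.1 hK₂K₁ z
      simpa using h
    have h2 : K₂ (K₂ z) = -((α : ℂ) • K₂ z) := by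
      have h := congrArg (⇑K₂) hTz'
      rw [map_zero, map_add, map_sub, map_smul, hK₂K₁z, sub_zero] at h
      exact eq_neg_of_add_eq_zero_right h
    have hsym₂ := isSelfAdjoint_iff_isSymmetric.mp hK₂pos.isSelfAdjoint
    have hK₂z : K₂ z = 0 := by
      have hre : RCLike.re (inner ℂ (K₂ (K₂ z)) z : ℂ) = ‖K₂ z‖ ^ 2 := by
        rw [show (inner ℂ (K₂ (K₂ z)) z : ℂ) = inner ℂ (K₂ z) (K₂ z) from hsym₂ (K₂ z) z,
          inner_self_eq_norm_sq]
      rw [h2] at hre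
      have hre2 : RCLike.re (inner ℂ (-((α : ℂ) • K₂ z)) z : ℂ)
          = -(α * RCLike.re (inner ℂ (K₂ z) z : ℂ)) := by
        rw [inner_neg_left, inner_smul_left, Complex.conj_ofReal, map_neg,
          RCLike.re_to_complex]
        rw [Complex.re_ofReal_mul]
        rfl
      rw [hre2] at hre
      have hnn := hK₂pos.re_inner_nonneg_left z
      have : ‖K₂ z‖ ^ 2 ≤ 0 := by nlinarith
      have : ‖K₂ z‖ = 0 := by nlinarith [norm_nonneg (K₂ z)]
      exact norm_eq_zero.mp this
    have hK₁z : K₁ z = (α : ℂ) • z := by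
      rw [hK₂z, add_zero, sub_eq_zero] at hTz'
      exact hTz'.symm
    have hge : α ≤ ‖K₁‖ := by
      have h3 : ‖K₁ z‖ = α * ‖z‖ := by
        rw [hK₁z, norm_smul, Complex.norm_real, Real.norm_of_nonneg hα.le]
      have h4 := K₁.le_opNorm z
      rw [h3] at h4
      have hz' : 0 < ‖z‖ := norm_pos_iff.2 hz0
      nlinarith
    linarith
  · intro hn
    have hsq := aux_smul_sub_sq α K₁ hK₁pos hK₁le
    have hsym₁ := isSelfAdjoint_iff_isSymmetric.mp hK₁pos.isSelfAdjoint
    have hpoint : ∀ x : H, ‖K₁ x‖ ^ 2 ≤ α * RCLike.re (inner ℂ (K₁ x) x : ℂ) := by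
      intro x
      have h := hsq.re_inner_nonneg_left x
      rw [sub_apply, smul_apply, ContinuousLinearMap.mul_apply, inner_sub_left,
        inner_smul_left, Complex.conj_ofReal, map_sub,
        show (inner ℂ (K₁ (K₁ x)) x : ℂ) = inner ℂ (K₁ x) (K₁ x) from hsym₁ (K₁ x) x,
        inner_self_eq_norm_sq] at h
      have h2 : RCLike.re ((α : ℂ) * inner ℂ (K₁ x) x) = α * RCLike.re (inner ℂ (K₁ x) x : ℂ) := by
        rw [RCLike.re_to_complex, Complex.re_ofReal_mul]; rfl
      rw [h2] at h
      linarith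
    have hseq : ∀ n : ℕ, ∃ x : H, ‖x‖ < 1 ∧ α - 1 / (n + 1) < ‖K₁ x‖ := by
      intro n
      apply K₁.exists_lt_apply_of_lt_opNorm
      rw [hn]
      have : (0 : ℝ) < 1 / (n + 1) := by positivity
      linarith
    choose x hx1 hx2 using hseq
    have hKx_le : ∀ n, ‖K₁ (x n)‖ ≤ α := by
      intro n
      have h := K₁.le_opNorm (x n)
      rw [hn] at h
      nlinarith [hx1 n, norm_nonneg (x n)]
    have hKx_tendsto : Filter.Tendsto (fun n => ‖K₁ (x n)‖) Filter.atTop (nhds α) := by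
      have hlo : Filter.Tendsto (fun n : ℕ => α - 1 / (n + 1)) Filter.atTop (nhds α) := by
        simpa using (tendsto_const_nhds (x := α)).sub tendsto_one_div_add_atTop_nhds_zero_nat
      exact tendsto_of_tendsto_of_tendsto_of_le_of_le hlo tendsto_const_nhds
        (fun n => (hx2 n).le) hKx_le
    set d : ℕ → H := fun n => K₁ (x n) - (α : ℂ) • x n with hd
    have hd_sq : ∀ n, ‖d n‖ ^ 2 ≤ α ^ 2 - ‖K₁ (x n)‖ ^ 2 := by
      intro n
      have h1 := hpoint (x n)
      have h2 : ‖d n‖ ^ 2 = ‖K₁ (x n)‖ ^ 2 - 2 * (α * RCLike.re (inner ℂ (K₁ (x n)) (x n) : ℂ))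
          + α ^ 2 * ‖x n‖ ^ 2 := by
        rw [hd]
        rw [@norm_sub_sq ℂ, inner_smul_right, norm_smul, Complex.norm_real,
          Real.norm_of_nonneg hα.le]
        rw [show RCLike.re ((α : ℂ) * inner ℂ (K₁ (x n)) (x n)) =
          α * RCLike.re (inner ℂ (K₁ (x n)) (x n) : ℂ) by
            rw [RCLike.re_to_complex, Complex.re_ofReal_mul]; rfl]
        ring
      have hxn2 : ‖x n‖ ^ 2 ≤ 1 := by nlinarith [norm_nonneg (x n), (hx1 n).le]
      nlinarith [h1, hxn2, sq_nonneg α]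
    have hd_tendsto : Filter.Tendsto d Filter.atTop (nhds 0) := by
      rw [tendsto_zero_iff_norm_tendsto_zero]
      have hub : Filter.Tendsto (fun n => Real.sqrt (α ^ 2 - ‖K₁ (x n)‖ ^ 2))
          Filter.atTop (nhds 0) := by
        have h0 : Filter.Tendsto (fun n => α ^ 2 - ‖K₁ (x n)‖ ^ 2) Filter.atTop (nhds 0) := by
          have := tendsto_const_nhds (x := α ^ 2) (f := Filter.atTop (α := ℕ))
          simpa using this.sub (hKx_tendsto.pow 2)
        simpa using h0.sqrt
      apply squeeze_zero (fun n => norm_nonneg _) _ hub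
      intro n
      rw [show ‖d n‖ = Real.sqrt (‖d n‖ ^ 2) by rw [Real.sqrt_sq (norm_nonneg _)]]
      exact Real.sqrt_le_sqrt (hd_sq n)
    have hcpt : IsCompact (closure (⇑K₁ '' Metric.closedBall 0 1)) :=
      IsCompactOperator.isCompact_closure_image_closedBall (f := (K₁ : H →ₗ[ℂ] H)) hK₁cpt 1
    have hmem : ∀ n, K₁ (x n) ∈ closure (⇑K₁ '' Metric.closedBall 0 1) := fun n =>
      subset_closure ⟨x n, by
        simpa [Metric.mem_closedBall, dist_zero_right] using (hx1 n).le, rfl⟩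
    obtain ⟨y, -, φ, hφ, hy⟩ := hcpt.tendsto_subseq hmem
    have hxφ : Filter.Tendsto (fun n => x (φ n)) Filter.atTop (nhds ((α : ℂ)⁻¹ • y)) := by
      have h1 : Filter.Tendsto (fun n => (α : ℂ) • x (φ n)) Filter.atTop (nhds y) := by
        have h2 := hy.sub (hd_tendsto.comp hφ.tendsto_atTop)
        simpa [hd, Function.comp] using h2
      have h3 := h1.const_smul ((α : ℂ)⁻¹)
      simpa only [inv_smul_smul₀ hαC] using h3
    set x0 : H := (α : ℂ)⁻¹ • y with hx0def
    have hKx0 : K₁ x0 = y :=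
      tendsto_nhds_unique ((K₁.continuous.tendsto _).comp hxφ) hy
    have hynorm : ‖y‖ = α :=
      tendsto_nhds_unique hy.norm (hKx_tendsto.comp hφ.tendsto_atTop)
    have hy0 : y ≠ 0 := fun h => hα.ne (by rw [h, norm_zero] at hynorm; exact hynorm)
    have hx00 : x0 ≠ 0 := by
      intro h
      exact hy0 (by rw [← hKx0, h, map_zero])
    have heig : K₁ x0 = (α : ℂ) • x0 := by
      rw [hKx0, hx0def, smul_smul, mul_inv_cancel₀ hαC, one_smul]
    have hK₂x0 : K₂ x0 = 0 := by
      have h1 : K₂ (K₁ x0) = 0 := by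
        have h := ContinuousLinearMap.ext_iff.1 hK₂K₁ x0
        simpa using h
      rw [heig, map_smul] at h1
      exact (smul_eq_zero.mp h1).resolve_left hαC
    have hTx0 : T x0 = 0 := by
      rw [hT]
      simp [heig, hK₂x0]
    intro hinj
    exact hx00 (hinj (show T x0 = T 0 by rw [hTx0, map_zero]))
end

section
/- Let T be a quasinormal bounded operator on a complex Hilbert space with polar decomposition T = W|T|. If λ is an eigenvalue of |T|, then the eigenspace N(|T| - λI) reduces W, and hence reduces T. -/
open ContinuousLinearMap

local notation "⟪" x ", " y "⟫" => @inner ℂ _ _ x y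

set_option maxHeartbeats 1000000 in
/-- If `T` is quasinormal with polar decomposition `T = W|T|` and `λ` is an
eigenvalue of `|T|`, then `N(|T| - λI)` reduces `W` and hence reduces `T`. -/
theorem stmt_8 {H : Type*} [NormedAddCommGroup H] [InnerProductSpace ℂ H]
    [CompleteSpace H] (T W R : H →L[ℂ] H)
    (hquasi : T ∘L (adjoint T ∘L T) = (adjoint T ∘L T) ∘L T)
    (hRpos : R.IsPositive) (hR2 : R ∘L R = adjoint T ∘L T)
    (hpolar : T = W ∘L R)
    (hWiso : ∀ x ∈ (LinearMap.ker (T : H →ₗ[ℂ] H) : Submodule ℂ H)ᗮ, ‖W x‖ = ‖x‖)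
    (hkerW : LinearMap.ker (W : H →ₗ[ℂ] H) = LinearMap.ker (T : H →ₗ[ℂ] H))
    (l : ℂ) (hl : LinearMap.ker ((R - l • (1 : H →L[ℂ] H) : H →L[ℂ] H) : H →ₗ[ℂ] H) ≠ ⊥) :
    ∀ x ∈ LinearMap.ker ((R - l • (1 : H →L[ℂ] H) : H →L[ℂ] H) : H →ₗ[ℂ] H),
      W x ∈ LinearMap.ker ((R - l • (1 : H →L[ℂ] H) : H →L[ℂ] H) : H →ₗ[ℂ] H) ∧
      adjoint W x ∈ LinearMap.ker ((R - l • (1 : H →L[ℂ] H) : H →L[ℂ] H) : H →ₗ[ℂ] H) ∧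
      T x ∈ LinearMap.ker ((R - l • (1 : H →L[ℂ] H) : H →L[ℂ] H) : H →ₗ[ℂ] H) ∧
      adjoint T x ∈ LinearMap.ker ((R - l • (1 : H →L[ℂ] H) : H →L[ℂ] H) : H →ₗ[ℂ] H) := by
  have hRadj : adjoint R = R := hRpos.isSelfAdjoint.adjoint_eq
  have hmem : ∀ y : H, y ∈ LinearMap.ker ((R - l • (1 : H →L[ℂ] H) : H →L[ℂ] H) : H →ₗ[ℂ] H) ↔ R y = l • y := by
    intro y
    constructor
    · intro hy
      have : (R - l • (1 : H →L[ℂ] H)) y = 0 := hy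
      simpa [sub_eq_zero] using this
    · intro hy
      show (R - l • (1 : H →L[ℂ] H)) y = 0
      simp [hy]
  -- T* = R ∘ W*
  have hTadj : adjoint T = R ∘L adjoint W := by
    rw [hpolar, adjoint_comp, hRadj]
  -- pointwise : R(R y) = T*(T y)
  have hA : ∀ y, R (R y) = adjoint T (T y) := fun y => by
    simpa using DFunLike.congr_fun hR2 y
  -- quasinormality pointwise
  have hqT : ∀ y, R (R (T y)) = T (R (R y)) := by
    intro y
    have h := DFunLike.congr_fun hquasi y
    simp only [comp_apply] at h
    rw [hA, hA, h]
  have hqTa : ∀ y, R (R (adjoint T y)) = adjoint T (R (R y)) := by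
    intro y
    have h := congrArg adjoint hquasi
    simp only [adjoint_comp, adjoint_adjoint] at h
    have h' := DFunLike.congr_fun h y
    simp only [comp_apply] at h'
    rw [hA ((adjoint T) y), hA y]
    exact h'
  -- l is a nonnegative real
  obtain ⟨x₀, hx₀mem, hx₀ne⟩ := Submodule.ne_bot_iff _ |>.mp hl
  have hRx₀ : R x₀ = l • x₀ := (hmem x₀).mp hx₀mem
  have hinner₀ : ⟪R x₀, x₀⟫ = (starRingEnd ℂ) l * ⟪x₀, x₀⟫ := by
    rw [hRx₀, inner_smul_left]
  have hinner₀' : ⟪R x₀, x₀⟫ = l * ⟪x₀, x₀⟫ := by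
    have : ⟪R x₀, x₀⟫ = ⟪x₀, R x₀⟫ := by
      nth_rewrite 1 [← hRadj]
      rw [adjoint_inner_left]
    rw [this, hRx₀, inner_smul_right]
  have hx₀inner : ⟪x₀, x₀⟫ ≠ 0 := by
    simpa [inner_self_eq_zero] using hx₀ne
  have hlreal : (starRingEnd ℂ) l = l := by
    have := hinner₀.symm.trans hinner₀'
    exact mul_right_cancel₀ hx₀inner this
  have hl_im : l.im = 0 := by
    have := congrArg Complex.im hlreal
    simp [Complex.conj_im] at this
    linarith [this]
  have hl_re_nonneg : 0 ≤ l.re := by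
    have hpos := hRpos.2 x₀
    rw [reApplyInnerSelf_apply] at hpos
    have : RCLike.re ⟪R x₀, x₀⟫ = l.re * ‖x₀‖ ^ 2 := by
      rw [hinner₀', RCLike.mul_re, inner_self_im, inner_self_eq_norm_sq]
      simp [RCLike.re_to_complex, mul_comm]
    rw [this] at hpos
    have hn : (0:ℝ) < ‖x₀‖ ^ 2 := pow_pos (norm_pos_iff.mpr hx₀ne) 2
    nlinarith
  have hx : ∀ y : H, R y = l • y → R (R y) = (l * l) • y := by
    intro y hy
    rw [hy, map_smul, hy, smul_smul]
  intro x hxmem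
  have hRx : R x = l • x := (hmem x).mp hxmem
  rcases eq_or_ne l 0 with hl0 | hl0
  · -- zero eigenvalue case
    subst hl0
    have hRx0 : R x = 0 := by simpa using hRx
    have hTx0 : T x = 0 := by
      rw [hpolar]; simp [comp_apply, hRx0]
    have hWx0 : W x = 0 := by
      have : x ∈ LinearMap.ker (W : H →ₗ[ℂ] H) := by rw [hkerW]; exact hTx0
      exact this
    have hTax0 : adjoint T x = 0 := by
      have hTTa : T (adjoint T x) = 0 := by
        have : ⟪T (adjoint T x), T (adjoint T x)⟫ = 0 := by
          rw [← adjoint_inner_right, ← hA, hqTa, hRx0]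
          simp
        exact inner_self_eq_zero.mp this
      have : ⟪adjoint T x, adjoint T x⟫ = 0 := by
        rw [adjoint_inner_left, hTTa, inner_zero_right]
      exact inner_self_eq_zero.mp this
    have hWax0 : R (adjoint W x) = 0 := by
      have : adjoint T x = R (adjoint W x) := by rw [hTadj]; rfl
      rw [← this, hTax0]
    refine ⟨?_, ?_, ?_, ?_⟩ <;> rw [hmem] <;>
      simp [hWx0, hTx0, hTax0, hWax0]
  · -- nonzero (hence positive real) eigenvalue case
    have hl_re_pos : 0 < l.re := by
      rcases lt_or_eq_of_le hl_re_nonneg with h | h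
      · exact h
      · exfalso; apply hl0; apply Complex.ext <;> simp [← h, hl_im]
    -- key: R² y = l² y implies R y = l y
    have key : ∀ y : H, R (R y) = (l * l) • y → R y = l • y := by
      intro y hy
      set z := R y - l • y with hzdef
      have hRz : R z = -(l • z) := by
        rw [hzdef, map_sub, map_smul, hy, smul_sub, smul_smul, neg_sub]
      have hpos := hRpos.2 z
      rw [reApplyInnerSelf_apply] at hpos
      have hcomp : RCLike.re ⟪R z, z⟫ = -(l.re * ‖z‖ ^ 2) := by
        rw [hRz, inner_neg_left, inner_smul_left, map_neg, RCLike.mul_re,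
          inner_self_im, inner_self_eq_norm_sq, RCLike.conj_re]
        simp [RCLike.re_to_complex, mul_comm]
      rw [hcomp] at hpos
      have hz0 : z = 0 := by
        have hn : ‖z‖ ^ 2 ≤ 0 := by nlinarith
        have : ‖z‖ = 0 := by nlinarith [sq_nonneg ‖z‖, norm_nonneg z]
        simpa using norm_eq_zero.mp this
      have := sub_eq_zero.mp (hzdef ▸ hz0)
      exact this
    have hR2x : R (R x) = (l * l) • x := hx x hRx
    -- T x
    have hTx : R (T x) = l • T x := by
      apply key
      rw [hqT, hR2x, map_smul]
    -- T* x
    have hTax : R (adjoint T x) = l • adjoint T x := by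
      apply key
      rw [hqTa, hR2x, map_smul]
    -- W x
    have hTWx : T x = l • W x := by
      rw [hpolar]; simp only [comp_apply]; rw [hRx, map_smul]
    have hWx : R (W x) = l • W x := by
      have hW : W x = l⁻¹ • T x := by
        rw [hTWx, smul_smul, inv_mul_cancel₀ hl0, one_smul]
      rw [hW, map_smul, hTx, smul_smul, smul_smul, inv_mul_cancel₀ hl0,
        mul_inv_cancel₀ hl0]
    -- W* x
    have hWax : R (adjoint W x) = l • adjoint W x := by
      set z := adjoint W x with hzdef
      have hRz : R z = adjoint T x := by rw [hTadj]; rfl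
      have hRRz : R (R z) = l • R z := by rw [hRz]; exact hTax
      set z₀ := z - l⁻¹ • R z with hz₀def
      have hz₀ker : R z₀ = 0 := by
        rw [hz₀def, map_sub, map_smul, hRRz, smul_smul, inv_mul_cancel₀ hl0,
          one_smul, sub_self]
      have hWz₀ : W z₀ = 0 := by
        have hTz₀ : T z₀ = 0 := by rw [hpolar]; simp [comp_apply, hz₀ker]
        have : z₀ ∈ LinearMap.ker (W : H →ₗ[ℂ] H) := by rw [hkerW]; exact hTz₀
        exact this
      have hz₀0 : z₀ = 0 := by
        have h1 : ⟪z₀, z⟫ = 0 := by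
          rw [hzdef, adjoint_inner_right, hWz₀, inner_zero_left]
        have h2 : ⟪z₀, R z⟫ = 0 := by
          rw [← hRadj, adjoint_inner_right, hz₀ker, inner_zero_left]
        have : ⟪z₀, z₀⟫ = 0 := by
          rw [hz₀def, inner_sub_right, inner_smul_right, h1, h2]
          simp
        exact inner_self_eq_zero.mp this
      have hzeq : z = l⁻¹ • R z := by
        have := sub_eq_zero.mp (hz₀def ▸ hz₀0)
        exact this
      calc R z = l • (l⁻¹ • R z) := by
            rw [smul_smul, mul_inv_cancel₀ hl0, one_smul]
        _ = l • z := by rw [← hzeq]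
    refine ⟨?_, ?_, ?_, ?_⟩ <;> rw [hmem]
    · exact hWx
    · exact hWax
    · exact hTx
    · exact hTax
end

section
/- Let T be a quasinormal bounded operator with polar decomposition T = W|T|, and suppose |T| = αI - K₁ + K₂ where α ≥ 0, K₁, K₂ are positive compact operators with K₁K₂ = 0 and K₁ ≤ αI. Then W commutes with both K₁ and K₂. -/
set_option synthInstance.maxHeartbeats 1000000
set_option maxHeartbeats 1000000

open ContinuousLinearMap
open scoped InnerProductSpace

open Polynomial in
open scoped ContinuousFunctionalCalculus in
lemma commute_cfc_aux {A : Type*} [CStarAlgebra A] {a b : A}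
    (ha : IsSelfAdjoint a) (hab : Commute a b) (f : ℝ → ℝ) :
    Commute (cfc f a) b := by
  by_cases hf : ContinuousOn f (spectrum ℝ a)
  · rw [cfc_apply f a ha hf]
    have key : ∀ g : C(spectrum ℝ a, ℝ), Commute (cfcHom ha g) b := by
      intro g
      have hclosed : IsClosed {g : C(spectrum ℝ a, ℝ) | Commute (cfcHom ha g) b} := by
        have h1 : IsClosed {x : A | Commute x b} :=
          isClosed_eq (continuous_mul_right b) (continuous_mul_left b)
        exact h1.preimage (cfcHom_isClosedEmbedding ha).continuous
      have haev : ∀ q : ℝ[X], Commute (aeval a q) b := by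
        intro q
        induction q using Polynomial.induction_on with
        | C r => simpa using Algebra.commute_algebraMap_left r b
        | add p q hp hq => simpa using hp.add_left hq
        | monomial n r hq =>
          simp only [map_mul, map_pow, aeval_C, aeval_X]
          exact (Algebra.commute_algebraMap_left r b).mul_left (hab.pow_left _)
      have hpoly : ∀ g ∈ polynomialFunctions (spectrum ℝ a), Commute (cfcHom ha g) b := by
        rintro g hg
        obtain ⟨q, -, rfl⟩ := hg
        have heq : cfcHom ha (q.toContinuousMapOn (spectrum ℝ a)) = aeval a q := by
          rw [← cfc_polynomial q a ha, cfc_apply (q.eval) a ha (by fun_prop)]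
          congr 1
        show Commute ((cfcHom ha) (q.toContinuousMapOn (spectrum ℝ a))) b
        rw [heq]
        exact haev q
      have hdense := polynomialFunctions.topologicalClosure (spectrum ℝ a)
      have hg : g ∈ closure (polynomialFunctions (spectrum ℝ a) : Set C(spectrum ℝ a, ℝ)) := by
        rw [← Subalgebra.topologicalClosure_coe, hdense]
        trivial
      exact hclosed.closure_subset_iff.mpr hpoly hg
    exact key _
  · rw [cfc_apply_of_not_continuousOn a hf]
    exact Commute.zero_left b

lemma commute_sqrt_aux {H : Type*} [NormedAddCommGroup H] [InnerProductSpace ℂ H]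
    [CompleteSpace H] {a b : H →L[ℂ] H} (ha : (0 : H →L[ℂ] H) ≤ a) (hab : Commute a b) :
    Commute (CFC.sqrt a) b := by
  rw [CFC.sqrt_eq_cfc, cfc_nnreal_eq_real NNReal.sqrt a ha]
  exact commute_cfc_aux (IsSelfAdjoint.of_nonneg ha) hab _

lemma polar_comm_aux {H : Type*} [NormedAddCommGroup H] [InnerProductSpace ℂ H]
    [CompleteSpace H] (T W R : H →L[ℂ] H)
    (hRpos : R.IsPositive) (hR2 : R ∘L R = adjoint T ∘L T)
    (hpolar : T = W ∘L R)
    (hkerW : LinearMap.ker (W : H →ₗ[ℂ] H) = LinearMap.ker (T : H →ₗ[ℂ] H))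
    (h2 : Commute R T) : W ∘L R = R ∘L W := by
  have hRsa : IsSelfAdjoint R := hRpos.isSelfAdjoint
  have hsymm := ContinuousLinearMap.isSelfAdjoint_iff_isSymmetric.mp hRsa
  -- kernels agree
  have hnorm : ∀ x, ‖R x‖ = ‖T x‖ := by
    intro x
    have e1 : R (R x) = adjoint T (T x) := by
      calc R (R x) = (R ∘L R) x := rfl
      _ = (adjoint T ∘L T) x := by rw [hR2]
      _ = adjoint T (T x) := rfl
    have e2 : (⟪R x, R x⟫_ℂ) = ⟪T x, T x⟫_ℂ := by
      calc ⟪R x, R x⟫_ℂ = ⟪x, R (R x)⟫_ℂ := hsymm x (R x)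
      _ = ⟪x, adjoint T (T x)⟫_ℂ := by rw [e1]
      _ = ⟪T x, T x⟫_ℂ := ContinuousLinearMap.adjoint_inner_right T x (T x)
    rw [inner_self_eq_norm_sq_to_K, inner_self_eq_norm_sq_to_K] at e2
    have h3 : ‖R x‖ ^ 2 = ‖T x‖ ^ 2 := by exact_mod_cast e2
    rw [← Real.sqrt_sq (norm_nonneg (R x)), ← Real.sqrt_sq (norm_nonneg (T x)), h3]
  have hkerR : LinearMap.ker (R : H →ₗ[ℂ] H) = LinearMap.ker (T : H →ₗ[ℂ] H) := by
    ext x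
    simp only [LinearMap.mem_ker, ContinuousLinearMap.coe_coe]
    constructor
    · intro h
      have := hnorm x
      rw [h, norm_zero] at this
      exact norm_eq_zero.mp this.symm
    · intro h
      have := hnorm x
      rw [h, norm_zero] at this
      exact norm_eq_zero.mp this
  -- D vanishes on range R
  set D := W ∘L R - R ∘L W with hD
  have hcomm : T ∘L R = R ∘L T := h2.eq.symm
  have hDrange : ∀ y, D (R y) = 0 := by
    intro y
    have h5 : W (R (R y)) = R (W (R y)) := by
      calc W (R (R y)) = ((W ∘L R) ∘L R) y := rfl
      _ = (T ∘L R) y := by rw [← hpolar]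
      _ = (R ∘L T) y := by rw [hcomm]
      _ = (R ∘L (W ∘L R)) y := by rw [← hpolar]
      _ = R (W (R y)) := rfl
    simp only [hD, ContinuousLinearMap.sub_apply, ContinuousLinearMap.comp_apply, h5, sub_self]
  -- D vanishes on ker R
  have hDker : ∀ x ∈ LinearMap.ker (R : H →ₗ[ℂ] H), D x = 0 := by
    intro x hx
    have hx' : R x = 0 := hx
    have hxW : W x = 0 := by
      have : x ∈ LinearMap.ker (W : H →ₗ[ℂ] H) := by rw [hkerW, ← hkerR]; exact hx
      exact this
    simp only [hD, ContinuousLinearMap.sub_apply, ContinuousLinearMap.comp_apply, hx', hxW,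
      map_zero, sub_self]
  -- D vanishes on (ker R)ᗮ since it is contained in closure of range R
  have horth : ((LinearMap.range (R : H →ₗ[ℂ] H) : Submodule ℂ H))ᗮ ≤ LinearMap.ker (R : H →ₗ[ℂ] H) := by
    intro y hy
    have h6 : ∀ x : H, ⟪R x, y⟫_ℂ = 0 := fun x => hy (R x) (LinearMap.mem_range_self _ x)
    have h7 : ⟪R y, R y⟫_ℂ = 0 := (hsymm (R y) y).symm.trans (h6 (R y))
    exact inner_self_eq_zero.mp h7
  have hclosR : ((LinearMap.ker (R : H →ₗ[ℂ] H) : Submodule ℂ H))ᗮ ≤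
      (LinearMap.range (R : H →ₗ[ℂ] H) : Submodule ℂ H).topologicalClosure := by
    rw [← Submodule.orthogonal_orthogonal_eq_closure]
    exact Submodule.orthogonal_le horth
  have hDzero : D = 0 := by
    ext x
    obtain ⟨u, hu, v, hv, rfl⟩ :=
      Submodule.exists_add_mem_mem_orthogonal (K := (LinearMap.ker (R : H →ₗ[ℂ] H) : Submodule ℂ H)) x
    have hDu : D u = 0 := hDker u hu
    have hDv : D v = 0 := by
      have hvmem : v ∈ closure ((LinearMap.range (R : H →ₗ[ℂ] H) : Submodule ℂ H) : Set H) := hclosR hv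
      have hset : IsClosed {z : H | D z = 0} := isClosed_eq D.continuous continuous_const
      have hsub : ((LinearMap.range (R : H →ₗ[ℂ] H) : Submodule ℂ H) : Set H) ⊆ {z : H | D z = 0} := by
        rintro z ⟨w, rfl⟩
        exact hDrange w
      exact hset.closure_subset_iff.mpr hsub hvmem
    simp [map_add, hDu, hDv]
  have : W ∘L R - R ∘L W = 0 := hDzero
  exact sub_eq_zero.mp this

/-- If `T` is quasinormal with polar decomposition `T = W|T|` and
`|T| = αI - K₁ + K₂` (α ≥ 0, K₁,K₂ positive compact, K₁K₂ = 0, K₁ ≤ αI),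
then `W` commutes with both `K₁` and `K₂`. -/
theorem stmt_9 {H : Type*} [NormedAddCommGroup H] [InnerProductSpace ℂ H]
    [CompleteSpace H] (T W R K₁ K₂ : H →L[ℂ] H) (α : ℝ) (hα : 0 ≤ α)
    (hquasi : T ∘L (adjoint T ∘L T) = (adjoint T ∘L T) ∘L T)
    (hRpos : R.IsPositive) (hR2 : R ∘L R = adjoint T ∘L T)
    (hpolar : T = W ∘L R)
    (hWiso : ∀ x ∈ (LinearMap.ker (T : H →ₗ[ℂ] H) : Submodule ℂ H)ᗮ, ‖W x‖ = ‖x‖)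
    (hkerW : LinearMap.ker (W : H →ₗ[ℂ] H) = LinearMap.ker (T : H →ₗ[ℂ] H))
    (hK₁pos : K₁.IsPositive) (hK₂pos : K₂.IsPositive)
    (hK₁cpt : IsCompactOperator ⇑K₁) (hK₂cpt : IsCompactOperator ⇑K₂)
    (hK₁K₂ : K₁ ∘L K₂ = 0)
    (hK₁le : ((α : ℂ) • (1 : H →L[ℂ] H) - K₁).IsPositive)
    (hR : R = (α : ℂ) • (1 : H →L[ℂ] H) - K₁ + K₂) :
    W ∘L K₁ = K₁ ∘L W ∧ W ∘L K₂ = K₂ ∘L W := by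
  have hR0 : (0 : H →L[ℂ] H) ≤ R := (ContinuousLinearMap.nonneg_iff_isPositive R).mpr hRpos
  have hRsa : IsSelfAdjoint R := hRpos.isSelfAdjoint
  have hRR0 : (0 : H →L[ℂ] H) ≤ R * R := by
    simpa [hRsa.star_eq] using star_mul_self_nonneg R
  -- T commutes with R * R
  have h1 : Commute (R * R) T := by
    rw [← hR2] at hquasi
    exact hquasi.symm
  -- hence T commutes with R = sqrt (R * R)
  have hsqrtRR : CFC.sqrt (R * R) = R := CFC.sqrt_unique rfl hR0
  have h2 : Commute R T := hsqrtRR ▸ commute_sqrt_aux hRR0 h1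
  -- W commutes with R
  have hWR : W ∘L R = R ∘L W := polar_comm_aux T W R hRpos hR2 hpolar hkerW h2
  have hWR' : Commute W R := hWR
  -- W commutes with K₂ - K₁
  have hWsm : Commute W ((α : ℂ) • (1 : H →L[ℂ] H)) := (Commute.one_right W).smul_right _
  have hAeq : R - (α : ℂ) • (1 : H →L[ℂ] H) = K₂ - K₁ := by rw [hR]; abel
  have hWA : Commute W (K₂ - K₁) := hAeq ▸ (hWR'.sub_right hWsm)
  -- products of K₁, K₂ vanish
  have h12 : K₁ * K₂ = 0 := hK₁K₂
  have h21 : K₂ * K₁ = 0 := by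
    have := congrArg star h12
    rwa [star_mul, hK₁pos.isSelfAdjoint.star_eq, hK₂pos.isSelfAdjoint.star_eq, star_zero] at this
  have expand : (K₁ + K₂) * (K₁ + K₂) = (K₂ - K₁) * (K₂ - K₁) := by
    simp only [add_mul, mul_add, sub_mul, mul_sub, h12, h21]
    abel
  have hS0 : (0 : H →L[ℂ] H) ≤ K₁ + K₂ :=
    add_nonneg ((ContinuousLinearMap.nonneg_iff_isPositive K₁).mpr hK₁pos)
      ((ContinuousLinearMap.nonneg_iff_isPositive K₂).mpr hK₂pos)
  have hsq : CFC.sqrt ((K₂ - K₁) * (K₂ - K₁)) = K₁ + K₂ := CFC.sqrt_unique expand hS0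
  have hAsa : IsSelfAdjoint (K₂ - K₁) := hK₂pos.isSelfAdjoint.sub hK₁pos.isSelfAdjoint
  have hAA0 : (0 : H →L[ℂ] H) ≤ (K₂ - K₁) * (K₂ - K₁) := by
    simpa [hAsa.star_eq] using star_mul_self_nonneg (K₂ - K₁)
  have hWAA : Commute ((K₂ - K₁) * (K₂ - K₁)) W := hWA.symm.mul_left hWA.symm
  have hWS : Commute W (K₁ + K₂) := (hsq ▸ commute_sqrt_aux hAA0 hWAA).symm
  -- extract commutation with K₂
  have hsum : (K₁ + K₂) + (K₂ - K₁) = K₂ + K₂ := by abel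
  have hK2' : Commute W (K₂ + K₂) := hsum ▸ (hWS.add_right hWA)
  have hK2 : Commute W K₂ := by
    have h := hK2'.eq
    rw [mul_add, add_mul] at h
    have h2' : (2 : ℂ) • (W * K₂) = (2 : ℂ) • (K₂ * W) := by
      rw [two_smul, two_smul]; exact h
    exact smul_right_injective _ (two_ne_zero) h2'
  have hdiff : (K₁ + K₂) - (K₂ - K₁) = K₁ + K₁ := by abel
  have hK1' : Commute W (K₁ + K₁) := hdiff ▸ (hWS.sub_right hWA)
  have hK1 : Commute W K₁ := by
    have h := hK1'.eq
    rw [mul_add, add_mul] at h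
    have h2' : (2 : ℂ) • (W * K₁) = (2 : ℂ) • (K₁ * W) := by
      rw [two_smul, two_smul]; exact h
    exact smul_right_injective _ (two_ne_zero) h2'
  exact ⟨hK1.eq, hK2.eq⟩
end

section
/- Let T = [[cV₁, A],[0, B]] be a block operator on H = H₁ ⊕ H₂ with c = ‖T‖, V₁ an isometry on H₁, satisfying V₁*A = 0 and A*A + B*B = D for a positive D ∈ B(H₂). If T is hyponormal, then BB* ≤ D. -/
open ContinuousLinearMap

/-- Let `T = [[cV₁, A],[0, B]]` on `H = H₁ ⊕ H₂` with `c = ‖T‖`, `V₁` an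
isometry, `V₁*A = 0` and `A*A + B*B = D` for a positive `D`. If `T` is
hyponormal, then `BB* ≤ D`. -/
theorem stmt_14 {H₁ H₂ : Type*}
    [NormedAddCommGroup H₁] [InnerProductSpace ℂ H₁] [CompleteSpace H₁]
    [NormedAddCommGroup H₂] [InnerProductSpace ℂ H₂] [CompleteSpace H₂]
    (T : WithLp 2 (H₁ × H₂) →L[ℂ] WithLp 2 (H₁ × H₂)) (c : ℝ) (hc : c = ‖T‖)
    (hcpos : 0 < c)
    (V₁ : H₁ →L[ℂ] H₁) (A : H₂ →L[ℂ] H₁) (B : H₂ →L[ℂ] H₂) (D : H₂ →L[ℂ] H₂)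
    (hV₁ : ∀ x, ‖V₁ x‖ = ‖x‖) (hD : D.IsPositive)
    (hT : ∀ (x : H₁) (y : H₂),
      T ((WithLp.equiv 2 (H₁ × H₂)).symm (x, y)) =
        (WithLp.equiv 2 (H₁ × H₂)).symm ((c : ℂ) • V₁ x + A y, B y))
    (hVA : adjoint V₁ ∘L A = 0)
    (hABD : adjoint A ∘L A + adjoint B ∘L B = D)
    (hhypo : (adjoint T ∘L T - T ∘L adjoint T).IsPositive) :
    (D - B ∘L adjoint B).IsPositive := by
  have hBB : IsSelfAdjoint (B ∘L adjoint B) := by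
    rw [ContinuousLinearMap.isSelfAdjoint_iff', adjoint_comp, adjoint_adjoint]
  constructor
  · exact ContinuousLinearMap.isSelfAdjoint_iff_isSymmetric.mp (hD.isSelfAdjoint.sub hBB)
  · intro y
    -- the embedded vector
    set z : WithLp 2 (H₁ × H₂) := (WithLp.equiv 2 (H₁ × H₂)).symm (0, y) with hz
    have hTz : T z = (WithLp.equiv 2 (H₁ × H₂)).symm (A y, B y) := by
      rw [hz, hT 0 y]
      simp
    have hTadj : adjoint T z = (WithLp.equiv 2 (H₁ × H₂)).symm (0, adjoint B y) := by
      apply ext_inner_right ℂ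
      intro v
      rw [adjoint_inner_left]
      have hv : v = (WithLp.equiv 2 (H₁ × H₂)).symm
          ((WithLp.equiv 2 (H₁ × H₂) v).1, (WithLp.equiv 2 (H₁ × H₂) v).2) := rfl
      rw [hv, hT]
      simp [hz, WithLp.prod_inner_apply, adjoint_inner_left]
    have key : (0:ℝ) ≤ RCLike.re (inner ℂ (T z) (T z) : ℂ) -
        RCLike.re (inner ℂ (adjoint T z) (adjoint T z) : ℂ) := by
      have h0 := hhypo.2 z
      have e1 : (inner ℂ (adjoint T (T z)) z : ℂ) = inner ℂ (T z) (T z) :=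
        adjoint_inner_left T z (T z)
      have e2 : (inner ℂ (T (adjoint T z)) z : ℂ) =
          inner ℂ (adjoint T z) (adjoint T z) := (adjoint_inner_right T (adjoint T z) z).symm
      rw [ContinuousLinearMap.reApplyInnerSelf, ContinuousLinearMap.sub_apply,
        inner_sub_left, ContinuousLinearMap.comp_apply, ContinuousLinearMap.comp_apply,
        e1, e2, map_sub] at h0
      exact h0
    rw [hTz, hTadj] at key
    simp only [WithLp.prod_inner_apply, WithLp.equiv_symm_apply, WithLp.ofLp_toLp,
      inner_zero_left, zero_add, map_add] at key
    rw [ContinuousLinearMap.reApplyInnerSelf]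
    simp only [ContinuousLinearMap.sub_apply, inner_sub_left, map_sub,
      ContinuousLinearMap.comp_apply]
    have hDy : RCLike.re (inner ℂ (D y) y : ℂ) =
        RCLike.re (inner ℂ (A y) (A y) : ℂ) + RCLike.re (inner ℂ (B y) (B y) : ℂ) := by
      rw [← hABD]
      simp only [ContinuousLinearMap.add_apply, ContinuousLinearMap.comp_apply,
        inner_add_left, map_add, adjoint_inner_left]
    have hBBy : RCLike.re (inner ℂ (B (adjoint B y)) y : ℂ) =
        RCLike.re (inner ℂ (adjoint B y) (adjoint B y) : ℂ) := by
      rw [← adjoint_inner_right]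
    rw [hDy, hBBy]
    linarith
end
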